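/- Let F be a field, k ≥ 3, and b, c ∈ M_k(F). Suppose that for all indices i ≠ j (1 ≤ i, j ≤ k), the matrix b·e_{ij} + e_{ij}·c lies in the center Z(M_k(F)). Then b and c are diagonal matrices. -/

import Mathlib

open Matrix

/-- If a matrix commutes with everything, its off-diagonal entries vanish. -/
lemma central_off_diag_zero {F : Type*} [Field F] {k : ℕ}
    {z : Matrix (Fin k) (Fin k) F}
    (hz : ∀ x : Matrix (Fin k) (Fin k) F, z * x = x * z)
    {p q : Fin k} (hpq : p ≠ q) : z p q = 0 := by
  have := congrFun (congrFun (hz (Matrix.single q q 1)) p) q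
  simpa [Matrix.mul_apply, Matrix.single, Finset.sum_ite_eq, hpq, Ne.symm hpq] using this

/-- In `Fin k` with `3 ≤ k` there is an element distinct from two given ones. -/
lemma exists_third {k : ℕ} (hk : 3 ≤ k) (a b : Fin k) :
    ∃ x : Fin k, x ≠ a ∧ x ≠ b := by
  have hcard : ({a, b} : Finset (Fin k)).card < Fintype.card (Fin k) := by
    calc ({a, b} : Finset (Fin k)).card ≤ 2 := by
          apply le_trans (Finset.card_insert_le _ _); simp
      _ < 3 := by norm_num
      _ ≤ Fintype.card (Fin k) := by simpa using hk
  have hne : ({a, b} : Finset (Fin k)) ≠ Finset.univ := by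
    intro e; rw [e] at hcard; simp at hcard
  obtain ⟨x, -, hx⟩ := Finset.exists_of_ssubset (Finset.ssubset_univ_iff.mpr hne)
  refine ⟨x, ?_, ?_⟩ <;> simp_all

/-- Let `k ≥ 3` and `b, c ∈ M_k(F)`.  If for all `i ≠ j` the matrix
`b·e_{ij} + e_{ij}·c` is central, then `b` and `c` are diagonal. -/
theorem stmt_4 {F : Type*} [Field F] {k : ℕ} (hk : 3 ≤ k)
    (b c : Matrix (Fin k) (Fin k) F)
    (h : ∀ i j : Fin k, i ≠ j →
      ∀ x : Matrix (Fin k) (Fin k) F,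
        (b * Matrix.single i j (1 : F) + Matrix.single i j (1 : F) * c) * x =
          x * (b * Matrix.single i j (1 : F) + Matrix.single i j (1 : F) * c)) :
    b.IsDiag ∧ c.IsDiag := by
  have key : ∀ i j : Fin k, i ≠ j → ∀ p q : Fin k, p ≠ q →
      (b * Matrix.single i j (1 : F) + Matrix.single i j (1 : F) * c) p q = 0 :=
    fun i j hij p q hpq => central_off_diag_zero (h i j hij) hpq
  constructor
  · intro p i hpi
    obtain ⟨j, hji, hjp⟩ := exists_third hk i p
    have := key i j (Ne.symm hji) p j (Ne.symm hjp)
    simpa [Matrix.add_apply, Matrix.mul_apply, Matrix.single,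
      Finset.sum_ite_eq, hpi, Ne.symm hpi] using this
  · intro j q hjq
    obtain ⟨i, hij, hiq⟩ := exists_third hk j q
    have := key i j hij i q hiq
    simpa [Matrix.add_apply, Matrix.mul_apply, Matrix.single,
      Finset.sum_ite_eq, hjq, hiq] using this
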